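/- Let (X,d,μ) be an unbounded metric measure space, a ∈ X, p > 1, and (Ẋ, d̂_a, μ̂_a) the sphericalization with dμ̂_a(x) = dμ(x)/(1+d(x,a))^{2p}. For any open Ω ⊂ X and measurable u: Ω → [-∞,∞], ‖u‖_{N^{1,p}(Ω, d̂_a, μ̂_a)} ≤ ‖u‖_{N^{1,p}(Ω, d, μ)}; in particular N^{1,p}(Ω,d,μ) ⊂ N^{1,p}(Ω, d̂_a, μ̂_a). Moreover, if Ω is bounded in (X,d), then the two Newtonian spaces coincide as sets and have comparable norms. -/

import Mathlib

open MeasureTheory Metric Set ENNReal Filter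

/-- A (nonconstant, compact, rectifiable) curve with respect to a distance
function `D`, parameterized by arc length on `[0, len]`
(so that it is `1`-Lipschitz with respect to `D`). -/
structure CurveD (Y : Type*) (D : Y → Y → ℝ) where
  toFun : ℝ → Y
  len : ℝ
  len_pos : 0 < len
  lip : ∀ s ∈ Set.Icc (0:ℝ) len, ∀ t ∈ Set.Icc (0:ℝ) len, D (toFun s) (toFun t) ≤ |s - t|

/-- The curve lies in the set `Ω`. -/
def CurveD.inSet {Y : Type*} {D : Y → Y → ℝ} (γ : CurveD Y D) (Ω : Set Y) : Prop :=
  ∀ t ∈ Set.Icc (0:ℝ) γ.len, γ.toFun t ∈ Ω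

/-- Line integral `∫_γ ρ ds̃`, where the arc length element is `ds̃ = w ds`. -/
noncomputable def lineInt {Y : Type*} {D : Y → Y → ℝ} (γ : CurveD Y D) (ρ w : Y → ℝ≥0∞) : ℝ≥0∞ :=
  ∫⁻ t in Set.Icc (0:ℝ) γ.len, ρ (γ.toFun t) * w (γ.toFun t)

/-- The `p`-modulus of a curve family `Γ`, with energy measure `μ` and arc
length weighted by `w`. -/
noncomputable def pMod {Y : Type*} [MeasurableSpace Y] {D : Y → Y → ℝ} (p : ℝ) (μ : Measure Y)
    (w : Y → ℝ≥0∞) (Γ : Set (CurveD Y D)) : ℝ≥0∞ :=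
  ⨅ (ρ : Y → ℝ≥0∞) (_ : Measurable ρ) (_ : ∀ γ ∈ Γ, 1 ≤ lineInt γ ρ w), ∫⁻ y, ρ y ^ p ∂μ

/-- The absolute value of an extended real, as an element of `[0,∞]`. -/
noncomputable def eAbs (x : EReal) : ℝ≥0∞ :=
  if max x (-x) = (⊤ : EReal) then ⊤ else ENNReal.ofReal (max x (-x)).toReal

/-- `g` is an upper gradient of `u : Ω → [-∞,∞]` (arc length weighted by `w`). -/
def IsUpperGradientOn {Y : Type*} (D : Y → Y → ℝ) (w : Y → ℝ≥0∞) (Ω : Set Y)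
    (u : Y → EReal) (g : Y → ℝ≥0∞) : Prop :=
  ∀ γ : CurveD Y D, γ.inSet Ω →
    eAbs (u (γ.toFun γ.len) - u (γ.toFun 0)) ≤ lineInt γ g w

/-- `g` is a `p`-weak upper gradient of `u` in `Ω`: the upper gradient
inequality holds along `p`-almost every curve. -/
def IsPWUGOn {Y : Type*} [MeasurableSpace Y] (D : Y → Y → ℝ) (p : ℝ) (μ : Measure Y)
    (w : Y → ℝ≥0∞) (Ω : Set Y) (u : Y → EReal) (g : Y → ℝ≥0∞) : Prop :=
  ∃ Γ₀ : Set (CurveD Y D), pMod p μ w Γ₀ = 0 ∧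
    ∀ γ : CurveD Y D, γ.inSet Ω → γ ∉ Γ₀ →
      eAbs (u (γ.toFun γ.len) - u (γ.toFun 0)) ≤ lineInt γ g w

/-- `g` has locally finite `p`-energy in `Ω`. -/
def IsLocLp {Y : Type*} [MetricSpace Y] [MeasurableSpace Y] (p : ℝ) (μ : Measure Y)
    (Ω : Set Y) (g : Y → ℝ≥0∞) : Prop :=
  ∀ x ∈ Ω, ∃ r > (0:ℝ), ∫⁻ y in Ω ∩ Metric.ball x r, g y ^ p ∂μ < ⊤

/-- `g` is the minimal `p`-weak upper gradient of `u` in `Ω`. -/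
def IsMinimalPWUGOn {Y : Type*} [MetricSpace Y] [MeasurableSpace Y] (D : Y → Y → ℝ) (p : ℝ)
    (μ : Measure Y) (w : Y → ℝ≥0∞) (Ω : Set Y) (u : Y → EReal) (g : Y → ℝ≥0∞) : Prop :=
  IsPWUGOn D p μ w Ω u g ∧ IsLocLp p μ Ω g ∧
    ∀ h : Y → ℝ≥0∞, IsPWUGOn D p μ w Ω u h → IsLocLp p μ Ω h →
      ∀ᵐ x ∂(μ.restrict Ω), g x ≤ h x

/-- The `p`-th power of the Newtonian norm of `u` on `Ω`. -/
noncomputable def NpNormP {Y : Type*} [MeasurableSpace Y] (D : Y → Y → ℝ) (p : ℝ)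
    (μ : Measure Y) (w : Y → ℝ≥0∞) (Ω : Set Y) (u : Y → EReal) : ℝ≥0∞ :=
  (∫⁻ x in Ω, eAbs (u x) ^ p ∂μ) +
    ⨅ (g : Y → ℝ≥0∞) (_ : IsUpperGradientOn D w Ω u g), ∫⁻ x in Ω, g x ^ p ∂μ

/-- The Sobolev capacity of `E`. -/
noncomputable def sobCap {Y : Type*} [MeasurableSpace Y] (D : Y → Y → ℝ) (p : ℝ)
    (μ : Measure Y) (w : Y → ℝ≥0∞) (E : Set Y) : ℝ≥0∞ :=
  ⨅ (u : Y → EReal) (_ : ∀ x ∈ E, 1 ≤ u x), NpNormP D p μ w Set.univ u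

/-- The sphericalized arc length weight `ds̃ = ds/(1+d(x,a))²`. -/
noncomputable def hatW {X : Type*} [MetricSpace X] (a : X) : X → ℝ≥0∞ :=
  fun x => ENNReal.ofReal ((1 + dist x a) ^ 2)⁻¹

/-- The sphericalization measure `dμ̂ₐ = dμ/(1+d(x,a))^{2p}`. -/
noncomputable def muHat {X : Type*} [MetricSpace X] [MeasurableSpace X] (μ : Measure X)
    (a : X) (p : ℝ) : Measure X :=
  μ.withDensity fun x => ENNReal.ofReal ((1 + dist x a) ^ (2 * p))⁻¹

/-- A `q`-Poincaré inequality for `(X,d,μ)`. -/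
def PoincareIneqP {X : Type*} [MetricSpace X] [MeasurableSpace X] (q : ℝ) (μ : Measure X) : Prop :=
  ∃ C > (0:ℝ), ∃ lam ≥ (1:ℝ), ∀ (u : X → ℝ) (g : X → ℝ≥0∞), Measurable u → Measurable g →
    MeasureTheory.LocallyIntegrable u μ →
    IsUpperGradientOn dist (fun _ => 1) Set.univ (fun x => (u x : EReal)) g →
    ∀ (x : X) (r : ℝ), 0 < r →
      ⨍⁻ y in Metric.ball x r, ENNReal.ofReal |u y - ⨍ z in Metric.ball x r, u z ∂μ| ∂μ ≤
        ENNReal.ofReal (C * Metric.diam (Metric.ball x r)) *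
          (⨍⁻ y in Metric.ball x (lam * r), g y ^ q ∂μ) ^ (1/q)

/-- `μ` is doubling and all balls have positive finite measure. -/
def DoublingMeas {X : Type*} [MetricSpace X] [MeasurableSpace X] (μ : Measure X) : Prop :=
  (∀ (x : X) (r : ℝ), 0 < r → 0 < μ (Metric.ball x r) ∧ μ (Metric.ball x r) < ⊤) ∧
    ∃ C > (0:ℝ), ∀ (x : X) (r : ℝ), 0 < r →
      μ (Metric.ball x (2 * r)) ≤ ENNReal.ofReal C * μ (Metric.ball x r)

/-- `μ` is Ahlfors `Q`-regular. -/
def AhlforsRegular {X : Type*} [MetricSpace X] [MeasurableSpace X] (μ : Measure X) (Q : ℝ) : Prop :=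
  ∃ C > (0:ℝ), ∀ (x : X) (r : ℝ), 0 < r →
    ENNReal.ofReal (C⁻¹ * r ^ Q) ≤ μ (Metric.ball x r) ∧
      μ (Metric.ball x r) ≤ ENNReal.ofReal (C * r ^ Q)

/-- The Newtonian norm does not increase under sphericalization:
`‖u‖_{N^{1,p}(Ω,d̂_a,μ̂_a)} ≤ ‖u‖_{N^{1,p}(Ω,d,μ)}` (so
`N^{1,p}(Ω,d,μ) ⊂ N^{1,p}(Ω,d̂_a,μ̂_a)`), and if `Ω` is bounded the two
Newtonian spaces coincide with comparable norms. -/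
private lemma ofReal_mul_inv_self {r : ℝ} (hr : 0 < r) :
    ENNReal.ofReal r * ENNReal.ofReal r⁻¹ = 1 := by
  rw [← ENNReal.ofReal_mul hr.le, mul_inv_cancel₀ hr.ne', ENNReal.ofReal_one]

private lemma ofReal_sq_rpow {x p : ℝ} (hx : 0 < x) (hp : 0 ≤ p) :
    ENNReal.ofReal (x ^ 2) ^ p = ENNReal.ofReal (x ^ (2 * p)) := by
  rw [ENNReal.ofReal_rpow_of_nonneg (by positivity) hp]
  congr 1
  rw [← Real.rpow_natCast x 2, ← Real.rpow_mul hx.le]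
  norm_num

theorem Newtonian_norm_sphericalization {X : Type*} [MetricSpace X] [MeasurableSpace X]
    [BorelSpace X] (μ : Measure X) (a : X) (p : ℝ) (hp : 1 < p)
    (hunb : ¬ Bornology.IsBounded (Set.univ : Set X))
    (Ω : Set X) (hΩ : IsOpen Ω) :
    (∀ u : X → EReal,
      NpNormP dist p (muHat μ a p) (hatW a) Ω u ≤ NpNormP dist p μ (fun _ => 1) Ω u) ∧
    (Bornology.IsBounded Ω → ∃ C : ℝ≥0∞, 1 ≤ C ∧ C < ⊤ ∧ ∀ u : X → EReal,
      NpNormP dist p μ (fun _ => 1) Ω u ≤ C * NpNormP dist p (muHat μ a p) (hatW a) Ω u) := by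
  have hp0 : (0:ℝ) ≤ p := by linarith
  set dens : X → ℝ≥0∞ := fun x => ENNReal.ofReal ((1 + dist x a) ^ (2 * p))⁻¹ with hdens_def
  have hmu : muHat μ a p = μ.withDensity dens := rfl
  have hdx : ∀ x : X, (0:ℝ) < 1 + dist x a := fun x => by positivity
  have hdx1 : ∀ x : X, (1:ℝ) ≤ 1 + dist x a := fun x => by
    have := dist_nonneg (x := x) (y := a); linarith
  have hdens_meas : Measurable dens := by fun_prop
  have hdens_lt : ∀ᵐ x ∂μ, dens x < ⊤ := ae_of_all _ fun x => ENNReal.ofReal_lt_top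
  have hrpow_pos : ∀ x : X, (0:ℝ) < (1 + dist x a) ^ (2 * p) :=
    fun x => Real.rpow_pos_of_pos (hdx x) _
  have hcancel : ∀ x : X, ENNReal.ofReal ((1 + dist x a) ^ (2 * p)) * dens x = 1 :=
    fun x => ofReal_mul_inv_self (hrpow_pos x)
  have hcancel2 : ∀ x : X, ENNReal.ofReal ((1 + dist x a) ^ 2) *
      ENNReal.ofReal (((1 + dist x a) ^ 2)⁻¹) = 1 :=
    fun x => ofReal_mul_inv_self (by positivity)
  have hpow : ∀ x : X, (ENNReal.ofReal ((1 + dist x a) ^ 2)) ^ p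
      = ENNReal.ofReal ((1 + dist x a) ^ (2 * p)) :=
    fun x => ofReal_sq_rpow (hdx x) hp0
  have hpow_inv : ∀ x : X, (ENNReal.ofReal (((1 + dist x a) ^ 2)⁻¹)) ^ p = dens x := by
    intro x
    rw [ENNReal.ofReal_rpow_of_nonneg (by positivity) hp0, Real.inv_rpow (by positivity)]
    simp only [hdens_def]
    congr 2
    rw [← Real.rpow_natCast (1 + dist x a) 2, ← Real.rpow_mul (hdx x).le]
    norm_num
  -- the two set integrals against `muHat` rewritten against `μ`
  have hint : ∀ f : X → ℝ≥0∞, ∫⁻ x in Ω, f x ∂(muHat μ a p) = ∫⁻ x in Ω, dens x * f x ∂μ := by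
    intro f
    rw [hmu, restrict_withDensity hΩ.measurableSet,
      lintegral_withDensity_eq_lintegral_mul_non_measurable _ hdens_meas
        (ae_restrict_of_ae hdens_lt)]
    rfl
  constructor
  · -- Part 1: the sphericalized norm is smaller
    intro u
    unfold NpNormP
    refine add_le_add ?_ ?_
    · -- measure part: `dens ≤ 1`
      rw [hint]
      refine lintegral_mono fun x => ?_
      refine mul_le_of_le_one_left zero_le ?_
      refine ENNReal.ofReal_le_one.2 ?_
      exact inv_le_one_of_one_le₀ (Real.one_le_rpow (hdx1 x) (by positivity))
    · -- gradient part
      refine le_iInf₂ fun g hg => ?_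
      set g' : X → ℝ≥0∞ := fun x => g x * ENNReal.ofReal ((1 + dist x a) ^ 2) with hg'_def
      have hug' : IsUpperGradientOn dist (hatW a) Ω u g' := by
        intro γ hγ
        have hli : lineInt γ g' (hatW a) = lineInt γ g (fun _ => 1) := by
          unfold lineInt
          refine lintegral_congr fun t => ?_
          simp only [hg'_def, hatW, mul_assoc, hcancel2 (γ.toFun t), mul_one]
        rw [hli]
        exact hg γ hγ
      refine (iInf₂_le g' hug').trans (le_of_eq ?_)
      rw [hint]
      refine lintegral_congr fun x => ?_
      simp only [hg'_def]
      rw [ENNReal.mul_rpow_of_nonneg _ _ hp0, hpow x]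
      calc dens x * (g x ^ p * ENNReal.ofReal ((1 + dist x a) ^ (2 * p)))
          = g x ^ p * (ENNReal.ofReal ((1 + dist x a) ^ (2 * p)) * dens x) := by ring
        _ = g x ^ p := by rw [hcancel x, mul_one]
  · -- Part 2: bounded `Ω`
    intro hΩb
    obtain ⟨r, hr⟩ := hΩb.subset_closedBall a
    set R : ℝ := max r 0 with hR_def
    have hR0 : 0 ≤ R := le_max_right _ _
    have hRd : ∀ x ∈ Ω, dist x a ≤ R := fun x hx =>
      le_trans (mem_closedBall.1 (hr hx)) (le_max_left _ _)
    refine ⟨ENNReal.ofReal ((1 + R) ^ (2 * p)), ?_, ENNReal.ofReal_lt_top, ?_⟩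
    · exact ENNReal.one_le_ofReal.2 (Real.one_le_rpow (by linarith) (by positivity))
    set C : ℝ≥0∞ := ENNReal.ofReal ((1 + R) ^ (2 * p)) with hC_def
    have hC1 : 1 ≤ C :=
      ENNReal.one_le_ofReal.2 (Real.one_le_rpow (by linarith) (by positivity))
    intro u
    unfold NpNormP
    rw [mul_add]
    refine add_le_add ?_ ?_
    · -- measure part: `1 ≤ C * dens x` on `Ω`
      rw [hint, ← lintegral_const_mul' _ _ (by simp [hC_def])]
      refine lintegral_mono_ae ((ae_restrict_iff' hΩ.measurableSet).2 (ae_of_all _ ?_))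
      intro x hx
      have h1 : (1:ℝ≥0∞) ≤ C * dens x := by
        rw [hC_def, hdens_def, ← ENNReal.ofReal_mul (by positivity)]
        refine ENNReal.one_le_ofReal.2 ?_
        rw [← div_eq_mul_inv, le_div_iff₀ (hrpow_pos x), one_mul]
        exact Real.rpow_le_rpow (hdx x).le (by have := hRd x hx; linarith) (by positivity)
      calc eAbs (u x) ^ p = 1 * eAbs (u x) ^ p := (one_mul _).symm
        _ ≤ C * dens x * eAbs (u x) ^ p := by gcongr
        _ = C * (dens x * eAbs (u x) ^ p) := by ring
    · -- gradient part: no constant needed, then use `1 ≤ C`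
      refine le_trans ?_ (le_mul_of_one_le_left zero_le hC1)
      refine le_iInf₂ fun g hg => ?_
      set g'' : X → ℝ≥0∞ := fun x => g x * ENNReal.ofReal (((1 + dist x a) ^ 2)⁻¹) with hg''_def
      have hug'' : IsUpperGradientOn dist (fun _ => 1) Ω u g'' := by
        intro γ hγ
        have hli : lineInt γ g'' (fun _ => 1) = lineInt γ g (hatW a) := by
          unfold lineInt
          refine lintegral_congr fun t => ?_
          simp only [hg''_def, hatW, mul_one]
        rw [hli]
        exact hg γ hγ
      refine (iInf₂_le g'' hug'').trans (le_of_eq ?_)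
      rw [hint]
      refine lintegral_congr fun x => ?_
      simp only [hg''_def]
      rw [ENNReal.mul_rpow_of_nonneg _ _ hp0, hpow_inv x]
      ring
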